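/- Let L be an N×N complex matrix with eigenvalues λ_1, ..., λ_N (with multiplicity), and let a_0, ..., a_{n−1} be scalars. Form the nN×nN block companion matrix A with blocks: A has identity blocks I_N on the superdiagonal positions (i, i+1) for i = 1,...,n−1, bottom block row (−a_0 L, −a_1 L, ..., −a_{n−1} L), and zeros elsewhere. Then the characteristic polynomial of A is det(sI − A) = ∏_{l=1}^{N} (s^n + a_{n−1} λ_l s^{n−1} + ... + a_1 λ_l s + a_0 λ_l); equivalently, the spectrum of A is the union over l of the roots of s^n + λ_l (a_{n−1} s^{n−1} + ... + a_1 s + a_0). -/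

import Mathlib

open Matrix Polynomial

set_option maxHeartbeats 1000000
set_option synthInstance.maxHeartbeats 1000000

/-- The closed-loop matrix of `n`-th order consensus: block companion matrix
with identity blocks on the block superdiagonal and bottom block row
`(-a₀ L, -a₁ L, …, -a_{n-1} L)`. -/
def blockCompanion {R : Type*} [CommRing R] (n N : ℕ) (a : Fin n → R)
    (L : Matrix (Fin N) (Fin N) R) :
    Matrix (Fin n × Fin N) (Fin n × Fin N) R :=
  fun p q =>
    if p.1.val + 1 = q.1.val then (if p.2 = q.2 then 1 else 0)
    else if p.1.val = n - 1 then -(a q.1) * L p.2 q.2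
    else 0

noncomputable def Wmat (n N : ℕ) : Matrix (Fin n × Fin N) (Fin n × Fin N) ℂ[X] :=
  fun p r => if r.1 ≤ p.1 ∧ p.2 = r.2 then X ^ (p.1.val - r.1.val) else 0

noncomputable def gpoly (n : ℕ) (a : Fin n → ℂ) (s : Fin n) : ℂ[X] :=
  ∑ j : Fin n, if s ≤ j then C (a j) * X ^ (j.val - s.val) else 0

noncomputable def Mmat (m N : ℕ) (a : Fin (m+1) → ℂ) (L : Matrix (Fin N) (Fin N) ℂ) :
    Matrix (Fin (m+1) × Fin N) (Fin (m+1) × Fin N) ℂ[X] :=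
  fun p r =>
    if p.1.val = m then
      (if p.2 = r.2 then X ^ (m + 1 - r.1.val) else 0) + gpoly (m+1) a r.1 * C (L p.2 r.2)
    else if p.1.val + 1 = r.1.val ∧ p.2 = r.2 then -1 else 0

lemma det_Wmat (n N : ℕ) : (Wmat n N).det = 1 := by
  have hbt : (Wmat n N).BlockTriangular (fun p => OrderDual.toDual p.1) := by
    intro p r h
    have h' : p.1 < r.1 := h
    simp only [Wmat]
    rw [if_neg]
    rintro ⟨h1, -⟩
    exact absurd h1 (not_le.2 h')
  rw [hbt.det_fintype]
  refine Finset.prod_eq_one fun k _ => ?_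
  have hone : (Wmat n N).toSquareBlock (fun p => OrderDual.toDual p.1) k = 1 := by
    ext p r : 2
    have hp : (p : Fin n × Fin N).1 = (r : Fin n × Fin N).1 := by
      have := p.2.trans r.2.symm
      exact this
    simp only [Matrix.toSquareBlock_def, Wmat, Matrix.of_apply, Matrix.one_apply]
    by_cases h : (p : Fin n × Fin N).2 = (r : Fin n × Fin N).2
    · rw [if_pos ⟨le_of_eq hp.symm, h⟩, if_pos, hp, Nat.sub_self, pow_zero]
      exact Subtype.ext (Prod.ext hp h)
    · rw [if_neg (fun hc => h hc.2), if_neg (fun hc => h (congrArg Prod.snd (Subtype.ext_iff.1 hc)))]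
  rw [hone, Matrix.det_one]

lemma sum_delta {R : Type*} [CommRing R] {ι : Type*} [Fintype ι] [DecidableEq ι]
    (f : ι → R) (c : R) (p : ι) :
    ∑ r : ι, (if p = r then c else 0) * f r = c * f p := by
  simp [ite_mul, Finset.sum_ite_eq]

lemma mulW (m N : ℕ) (a : Fin (m+1) → ℂ) (L : Matrix (Fin N) (Fin N) ℂ) :
    charmatrix (blockCompanion (m+1) N a L) * Wmat (m+1) N = Mmat m N a L := by
  apply Matrix.ext
  rintro ⟨i, x⟩ ⟨j, y⟩
  rw [Matrix.mul_apply]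
  by_cases hi : i.val = m
  · have hch : ∀ s : Fin (m+1) × Fin N,
        charmatrix (blockCompanion (m+1) N a L) (i,x) s
          = (if (i,x) = s then X else 0) + C (a s.1) * C (L x s.2) := by
      intro s
      rw [charmatrix_apply]
      have h1 : ¬ (i.val + 1 = s.1.val) := by have := s.1.isLt; omega
      have h2 : i.val = m + 1 - 1 := by omega
      simp only [blockCompanion, if_neg h1, if_pos h2, diagonal_apply]
      rw [neg_mul, map_neg, _root_.map_mul]
      ring
    calc ∑ s : Fin (m+1) × Fin N,
            charmatrix (blockCompanion (m+1) N a L) (i,x) s * Wmat (m+1) N s (j,y)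
        = ∑ s : Fin (m+1) × Fin N, ((if (i,x) = s then X else 0) * Wmat (m+1) N s (j,y)
            + C (a s.1) * C (L x s.2) * Wmat (m+1) N s (j,y)) := by
          refine Finset.sum_congr rfl fun s _ => ?_
          rw [hch s, add_mul]
      _ = X * Wmat (m+1) N (i,x) (j,y)
            + ∑ s : Fin (m+1) × Fin N, C (a s.1) * C (L x s.2) * Wmat (m+1) N s (j,y) := by
          rw [Finset.sum_add_distrib, sum_delta]
      _ = Mmat m N a L (i,x) (j,y) := by
          have hW : X * Wmat (m+1) N (i,x) (j,y) = if x = y then X ^ (m + 1 - j.val) else 0 := by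
            have hj : j ≤ i := by
              have := j.isLt; exact Fin.le_def.2 (by omega)
            simp only [Wmat]
            by_cases h : x = y
            · rw [if_pos ⟨hj, h⟩, if_pos h, ← pow_succ']
              congr 1
              omega
            · rw [if_neg (fun hc => h hc.2), if_neg h, mul_zero]
          have hS : ∑ s : Fin (m+1) × Fin N, C (a s.1) * C (L x s.2) * Wmat (m+1) N s (j,y)
              = gpoly (m+1) a j * C (L x y) := by
            rw [Fintype.sum_prod_type, gpoly, Finset.sum_mul]
            refine Finset.sum_congr rfl fun k _ => ?_
            simp only [Wmat]
            rw [Finset.sum_eq_single y]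
            · by_cases h : j ≤ k
              · rw [if_pos ⟨h, rfl⟩, if_pos h]; ring
              · rw [if_neg (fun hc => h hc.1), if_neg h, mul_zero, zero_mul]
            · intro z _ hz
              rw [if_neg (fun hc => hz hc.2), mul_zero]
            · intro h; exact absurd (Finset.mem_univ y) h
          rw [hW, hS, Mmat]
          simp only [if_pos hi]
  · set i' : Fin (m+1) := ⟨i.val + 1, by omega⟩ with hi'
    have hv : i'.val = i.val + 1 := rfl
    have hch : ∀ s : Fin (m+1) × Fin N,
        charmatrix (blockCompanion (m+1) N a L) (i,x) s
          = (if (i,x) = s then X else 0) - (if (i',x) = s then 1 else 0) := by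
      intro s
      rw [charmatrix_apply]
      have h2 : ¬ (i.val = m + 1 - 1) := by omega
      simp only [blockCompanion, if_neg h2, diagonal_apply]
      congr 1
      by_cases h1 : i.val + 1 = s.1.val
      · rw [if_pos h1]
        have : (i', x) = s ↔ x = s.2 := by
          constructor
          · rintro rfl; rfl
          · intro h; rw [Prod.ext_iff]
            exact ⟨Fin.ext (hv.trans h1), h⟩
        by_cases h : x = s.2
        · rw [if_pos h, if_pos (this.2 h), Polynomial.C_1]
        · rw [if_neg h, if_neg (fun hc => h (this.1 hc)), Polynomial.C_0]
      · rw [if_neg h1, Polynomial.C_0, if_neg]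
        rintro rfl
        exact h1 hv.symm
    calc ∑ s : Fin (m+1) × Fin N,
            charmatrix (blockCompanion (m+1) N a L) (i,x) s * Wmat (m+1) N s (j,y)
        = ∑ s : Fin (m+1) × Fin N, ((if (i,x) = s then X else 0) * Wmat (m+1) N s (j,y)
            - (if (i',x) = s then 1 else 0) * Wmat (m+1) N s (j,y)) := by
          refine Finset.sum_congr rfl fun s _ => ?_
          rw [hch s, sub_mul]
      _ = X * Wmat (m+1) N (i,x) (j,y) - 1 * Wmat (m+1) N (i',x) (j,y) := by
          rw [Finset.sum_sub_distrib, sum_delta, sum_delta]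
      _ = Mmat m N a L (i,x) (j,y) := by
          simp only [Wmat, Mmat, if_neg hi, one_mul]
          by_cases hxy : x = y
          · subst hxy
            simp only [eq_self_iff_true, and_true]
            rcases lt_trichotomy j.val (i.val + 1) with hj | hj | hj
            · have hji : j ≤ i := Fin.le_def.2 (by omega)
              have hji' : j ≤ i' := Fin.le_def.2 (by omega)
              rw [if_pos hji, if_pos hji', if_neg (by omega : ¬ (i.val + 1 = j.val)),
                ← pow_succ']
              rw [show i.val - j.val + 1 = i'.val - j.val by omega]
              ring
            · have hji : ¬ j ≤ i := fun hc => by have := Fin.le_def.1 hc; omega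
              have hji' : j ≤ i' := Fin.le_def.2 (by omega)
              rw [if_neg hji, if_pos hji', if_pos (by omega : i.val + 1 = j.val)]
              rw [show i'.val - j.val = 0 by omega, pow_zero]
              ring
            · have hji : ¬ j ≤ i := fun hc => by have := Fin.le_def.1 hc; omega
              have hji' : ¬ j ≤ i' := fun hc => by have := Fin.le_def.1 hc; omega
              rw [if_neg hji, if_neg hji', if_neg (by omega : ¬ (i.val + 1 = j.val))]
              ring
          · rw [if_neg (fun hc => hxy hc.2), if_neg (fun hc => hxy hc.2),
              if_neg (fun hc => hxy hc.2)]
            ring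

def eblk (m N : ℕ) (k : Fin (m+1)) : {p : Fin (m+1) × Fin N // p.1 = k} ≃ Fin N where
  toFun p := p.1.2
  invFun x := ⟨(k, x), rfl⟩
  left_inv p := Subtype.ext (Prod.ext p.2.symm rfl)
  right_inv x := rfl

lemma rot_facts (m : ℕ) (k : Fin (m+1)) :
    (k = 0 → (finRotate (m+1))⁻¹ k = Fin.last m)
      ∧ (k ≠ 0 → ((finRotate (m+1))⁻¹ k).val + 1 = k.val) := by
  set i := (finRotate (m+1))⁻¹ k with hi
  have hk : i + 1 = k := by
    rw [← finRotate_succ_apply, hi, Equiv.Perm.inv_def, Equiv.apply_symm_apply]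
  constructor
  · rintro rfl
    by_contra h
    have hv := Fin.val_add_one i
    rw [if_neg h] at hv
    rw [hk] at hv
    rw [Fin.val_zero] at hv
    omega
  · intro hk0
    have h1 : i ≠ Fin.last m := by
      rintro hlast
      rw [hlast, Fin.last_add_one] at hk
      exact hk0 hk.symm
    have hv := Fin.val_add_one i
    rw [if_neg h1] at hv
    rw [← hk]
    exact hv.symm

lemma det_Mmat (m N : ℕ) (a : Fin (m+1) → ℂ) (L : Matrix (Fin N) (Fin N) ℂ) :
    (Mmat m N a L).det
      = ((X ^ (m+1) : ℂ[X]) • (1 : Matrix (Fin N) (Fin N) ℂ[X])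
          + (∑ k : Fin (m+1), C (a k) * X ^ (k : ℕ)) • L.map C).det := by
  set B : Matrix (Fin N) (Fin N) ℂ[X] :=
    (X ^ (m+1) : ℂ[X]) • (1 : Matrix (Fin N) (Fin N) ℂ[X])
      + (∑ k : Fin (m+1), C (a k) * X ^ (k : ℕ)) • L.map C with hB
  set σ : Equiv.Perm (Fin (m+1) × Fin N) :=
    Equiv.prodCongrLeft (fun _ : Fin N => ((finRotate (m+1))⁻¹ : Equiv.Perm (Fin (m+1))))
    with hσ
  have happ : ∀ p : Fin (m+1) × Fin N, σ p = ((finRotate (m+1))⁻¹ p.1, p.2) := by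
    rintro ⟨i, x⟩; rfl
  -- block triangularity of the permuted matrix
  have hbt : ((Mmat m N a L).submatrix σ id).BlockTriangular Prod.fst := by
    rintro ⟨i, x⟩ ⟨j, y⟩ h
    have h' : j < i := h
    simp only [Matrix.submatrix_apply, happ, id_eq, Mmat]
    have hiz : i ≠ 0 := by
      rintro rfl
      exact absurd h' (Fin.not_lt_zero j)
    have hfact := (rot_facts m i).2 hiz
    rw [if_neg, if_neg]
    · rintro ⟨h1, -⟩
      have := Fin.lt_def.1 h'
      omega
    · intro hc
      have := i.isLt
      omega
  rw [show (Mmat m N a L).det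
      = ((Equiv.Perm.sign σ : ℤ) : ℂ[X]) * ((Mmat m N a L).submatrix σ id).det by
    rw [Matrix.det_permute, ← mul_assoc, ← Int.cast_mul, ← Units.val_mul,
      Int.units_mul_self, Units.val_one, Int.cast_one, one_mul]]
  rw [hbt.det_fintype]
  -- the blocks
  have hblock0 : (((Mmat m N a L).submatrix σ id).toSquareBlock Prod.fst 0).det = B.det := by
    rw [← Matrix.det_submatrix_equiv_self (eblk m N 0) B]
    congr 1
    apply Matrix.ext
    rintro ⟨⟨i, x⟩, hp⟩ ⟨⟨j, y⟩, hq⟩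
    have hp' : i = 0 := hp
    have hq' : j = 0 := hq
    subst hp'
    subst hq'
    simp only [Matrix.toSquareBlock_def, Matrix.of_apply, Matrix.submatrix_apply, happ,
      id_eq, Mmat]
    have hrot : (finRotate (m+1))⁻¹ (0 : Fin (m+1)) = Fin.last m := (rot_facts m 0).1 rfl
    rw [hrot]
    simp only [Fin.val_last, if_pos rfl]
    have hg : gpoly (m+1) a 0 = ∑ k : Fin (m+1), C (a k) * X ^ (k : ℕ) := by
      simp [gpoly, Fin.zero_le]
    rw [hg, hB]
    simp only [Matrix.add_apply, Matrix.smul_apply, Matrix.map_apply, Matrix.one_apply,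
      smul_eq_mul, eblk, Equiv.coe_fn_mk, Fin.val_zero, Nat.sub_zero, mul_ite, mul_one,
      mul_zero, if_true]
  have hblockk : ∀ k : Fin (m+1), k ≠ 0 →
      (((Mmat m N a L).submatrix σ id).toSquareBlock Prod.fst k).det = (-1 : ℂ[X]) ^ N := by
    intro k hk
    have hcard : Fintype.card {p : Fin (m+1) × Fin N // p.1 = k} = N := by
      rw [Fintype.card_congr (eblk m N k), Fintype.card_fin]
    have hone : ((Mmat m N a L).submatrix σ id).toSquareBlock Prod.fst k
        = (-1 : ℂ[X]) • (1 : Matrix {p : Fin (m+1) × Fin N // p.1 = k} _ ℂ[X]) := by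
      apply Matrix.ext
      rintro ⟨⟨i, x⟩, hp⟩ ⟨⟨j, y⟩, hq⟩
      have hp' : i = k := hp
      have hq' : j = k := hq
      subst hp'
      subst hq'
      simp only [Matrix.toSquareBlock_def, Matrix.of_apply, Matrix.submatrix_apply, happ,
        id_eq, Mmat]
      have hfact := (rot_facts m j).2 hk
      rw [if_neg (by have := j.isLt; omega)]
      rw [Matrix.smul_apply, Matrix.one_apply]
      by_cases h : x = y
      · subst h
        rw [if_pos ⟨hfact, rfl⟩, if_pos (Subtype.ext rfl), smul_eq_mul, mul_one]
      · rw [if_neg (fun hc => h hc.2), if_neg, smul_eq_mul, mul_zero]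
        intro hc
        exact h (congrArg (fun p => p.val.2) hc)
    rw [hone, Matrix.det_smul, Matrix.det_one, hcard, mul_one]
  rw [Fin.prod_univ_succ]
  rw [hblock0]
  rw [Finset.prod_congr rfl (fun k _ => hblockk k.succ (Fin.succ_ne_zero k))]
  rw [Finset.prod_const, Finset.card_univ, Fintype.card_fin]
  -- sign computation
  have hsgn : ((Equiv.Perm.sign σ : ℤ) : ℂ[X]) = (-1 : ℂ[X]) ^ (m * N) := by
    have h1 : Equiv.Perm.sign σ = (-1) ^ (m * N) := by
      rw [hσ, Equiv.Perm.sign_prodCongrLeft]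
      simp only [Equiv.Perm.sign_inv, sign_finRotate, Finset.prod_const, Finset.card_univ,
        Fintype.card_fin, ← pow_mul]
      rw [Nat.add_sub_cancel]
    rw [h1]
    rw [Units.val_pow_eq_pow_val]
    push_cast
    ring
  rw [hsgn, ← mul_assoc, mul_comm ((-1 : ℂ[X]) ^ (m * N)) B.det, mul_assoc, ← pow_mul,
    ← pow_add]
  rw [Even.neg_one_pow ⟨m * N, by ring⟩, mul_one]

lemma detB (n N : ℕ) (L : Matrix (Fin N) (Fin N) ℂ) (lam : Fin N → ℂ)
    (hlam : L.charpoly = ∏ l : Fin N, (X - C (lam l))) (q : ℂ[X]) :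
    ((X ^ n : ℂ[X]) • (1 : Matrix (Fin N) (Fin N) ℂ[X]) + q • L.map C).det
      = ∏ l : Fin N, (X ^ n + C (lam l) * q) := by
  by_cases hq : q = 0
  · subst hq
    simp [smul_smul, Matrix.det_smul]
  · have hinj : Function.Injective (algebraMap ℂ[X] (RatFunc ℂ)) :=
      RatFunc.algebraMap_injective ℂ
    set φ : ℂ[X] →+* RatFunc ℂ := algebraMap ℂ[X] (RatFunc ℂ) with hφ
    apply hinj
    have hq0 : φ q ≠ 0 := fun h => hq (hinj (by simpa using h))
    set t : RatFunc ℂ := -(φ (X ^ n)) / φ q with ht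
    have key : -(φ q) * t = φ (X ^ n) := by
      field_simp [ht]
      rw [ht, mul_div_cancel₀ _ hq0, neg_neg]
    have halg : ∀ c : ℂ, φ (C c) = algebraMap ℂ (RatFunc ℂ) c := by
      intro c
      rw [IsScalarTower.algebraMap_apply ℂ ℂ[X] (RatFunc ℂ)]
      rfl
    have h2 : ((t • (1 : Matrix (Fin N) (Fin N) (RatFunc ℂ)))
          - L.map (algebraMap ℂ (RatFunc ℂ))).det
        = ∏ l : Fin N, (t - algebraMap ℂ (RatFunc ℂ) (lam l)) := by
      have e1 : (aeval t) L.charpoly = ∏ l : Fin N, (t - algebraMap ℂ (RatFunc ℂ) (lam l)) := by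
        rw [hlam, map_prod]; simp
      have e2 : (charmatrix L).map (aeval t)
          = (t • (1 : Matrix (Fin N) (Fin N) (RatFunc ℂ))) - L.map (algebraMap ℂ (RatFunc ℂ)) := by
        ext i j
        by_cases h : i = j
        · subst h; simp [charmatrix_apply_eq, Matrix.one_apply]
        · simp [charmatrix_apply_ne _ _ _ h, Matrix.one_apply_ne h, Matrix.smul_apply]
      rw [← e2, ← e1, Matrix.charpoly]
      have := RingHom.map_det (aeval t).toRingHom (charmatrix L)
      simpa [RingHom.mapMatrix_apply] using this.symm
    have e3 : ((X ^ n : ℂ[X]) • (1 : Matrix (Fin N) (Fin N) ℂ[X]) + q • L.map C).map φ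
        = (-(φ q)) • ((t • (1 : Matrix (Fin N) (Fin N) (RatFunc ℂ)))
            - L.map (algebraMap ℂ (RatFunc ℂ))) := by
      ext i j
      by_cases h : i = j
      · subst h
        simp only [Matrix.map_apply, Matrix.add_apply, Matrix.smul_apply, Matrix.sub_apply,
          Matrix.one_apply_eq, smul_eq_mul, mul_one, map_add, _root_.map_mul, halg]
        linear_combination -key
      · simp only [Matrix.map_apply, Matrix.add_apply, Matrix.smul_apply, Matrix.sub_apply,
          Matrix.one_apply_ne h, smul_eq_mul, mul_zero, zero_add, map_zero]
        rw [_root_.map_mul, halg]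
        ring
    rw [RingHom.map_det φ, RingHom.mapMatrix_apply, e3, Matrix.det_smul, h2, map_prod,
      Fintype.card_fin,
      show ((-φ q) ^ N : RatFunc ℂ) = ∏ _l : Fin N, -φ q by simp [Finset.prod_const],
      ← Finset.prod_mul_distrib]
    refine Finset.prod_congr rfl fun l _ => ?_
    rw [map_add, _root_.map_mul, halg]
    linear_combination key

/-- The characteristic polynomial of the block companion closed-loop matrix is
`∏ₗ (sⁿ + λₗ (a_{n-1} s^{n-1} + … + a₁ s + a₀))`, where `λₗ` are the
eigenvalues of `L` with multiplicity. -/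
theorem charpoly_blockCompanion (n N : ℕ) (hn : 1 ≤ n)
    (a : Fin n → ℂ) (L : Matrix (Fin N) (Fin N) ℂ) (lam : Fin N → ℂ)
    (hlam : L.charpoly = ∏ l : Fin N, (X - C (lam l))) :
    (blockCompanion n N a L).charpoly
      = ∏ l : Fin N, (X ^ n + C (lam l) * ∑ k : Fin n, C (a k) * X ^ (k : ℕ)) := by
  obtain ⟨m, rfl⟩ : ∃ m, n = m + 1 := ⟨n - 1, by omega⟩
  rw [Matrix.charpoly]
  have h1 : (blockCompanion (m+1) N a L).charmatrix.det = (Mmat m N a L).det := by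
    rw [← mulW m N a L, Matrix.det_mul, det_Wmat, mul_one]
  rw [h1, det_Mmat, detB (m+1) N L lam hlam]
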